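/- Let c, g, v > 0 and f(0) > 0 with v > c/(g·f(0)). For s* = g − √(c·g/(f(0)·v)) we have s* ∈ (0, g) and C(s*) = c·s*/(g−s*) = √(c·g·f(0)·v) − c. -/

import Mathlib

open Real

/-- TimeBoost, one shared sequencer. For v > c/(g·f(0)) and
s* = g − √(c·g/(f(0)·v)), we have s* ∈ (0, g) and C(s*) = c·s*/(g−s*) = √(c·g·f(0)·v) − c. -/
theorem stmt_6 (c g v f0 : ℝ) (hc : 0 < c) (hg : 0 < g) (hv : 0 < v) (hf0 : 0 < f0)
    (hint : v > c / (g * f0)) :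
    0 < g - Real.sqrt (c * g / (f0 * v)) ∧ g - Real.sqrt (c * g / (f0 * v)) < g ∧
    c * (g - Real.sqrt (c * g / (f0 * v))) / (g - (g - Real.sqrt (c * g / (f0 * v)))) =
      Real.sqrt (c * g * f0 * v) - c := by
  have hfv : 0 < f0 * v := mul_pos hf0 hv
  have hx : 0 < c * g / (f0 * v) := div_pos (mul_pos hc hg) hfv
  set r := Real.sqrt (c * g / (f0 * v)) with hr
  have hrpos : 0 < r := Real.sqrt_pos.2 hx
  have hc' : c < g * f0 * v := by
    have := (div_lt_iff₀ (mul_pos hg hf0)).1 hint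
    linarith [this]
  have hrlt : r < g := by
    have h1 : c * g / (f0 * v) < g ^ 2 := by
      rw [div_lt_iff₀ hfv]
      nlinarith
    calc r < Real.sqrt (g ^ 2) := Real.sqrt_lt_sqrt hx.le h1
      _ = g := by rw [Real.sqrt_sq hg.le]
  refine ⟨by linarith, by linarith, ?_⟩
  have hr2 : r ^ 2 = c * g / (f0 * v) := Real.sq_sqrt hx.le
  have key : c * g = r * Real.sqrt (c * g * f0 * v) := by
    have h2 : (r * Real.sqrt (c * g * f0 * v)) ^ 2 = (c * g) ^ 2 := by
      rw [mul_pow, hr2, Real.sq_sqrt (by positivity)]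
      field_simp
    have h3 : 0 ≤ r * Real.sqrt (c * g * f0 * v) := by positivity
    have h4 : r * Real.sqrt (c * g * f0 * v) = Real.sqrt ((c * g) ^ 2) := by
      rw [← h2, Real.sqrt_sq h3]
    rw [h4, Real.sqrt_sq (by positivity)]
  have : g - (g - r) = r := by ring
  rw [this, div_eq_iff hrpos.ne']
  linear_combination key
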